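/- Let X = σZ and X' = σ'Z, where Z is a real random variable with density f satisfying sup_x |x f(x)| ≤ C_f, Z is independent of the pair (σ, σ'), and σ, σ' are positive random variables with min(σ, σ') > ρ almost surely. Then sup_{x ∈ ℝ} E[|1{X ≤ x} − 1{X' ≤ x}|] ≤ (C_f/ρ) E[|σ − σ'|]. -/

import Mathlib

open MeasureTheory ProbabilityTheory Set

lemma aux_symm_iic (a b : ℝ) :
    {z : ℝ | ¬((z ≤ a) ↔ (z ≤ b))} = Set.Ioc (min a b) (max a b) := by
  ext z
  simp only [Set.mem_setOf_eq, Set.mem_Ioc]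
  constructor
  · intro h
    by_cases h1 : z ≤ a <;> by_cases h2 : z ≤ b
    · exact absurd (iff_of_true h1 h2) h
    · exact ⟨lt_of_le_of_lt (min_le_right a b) (not_le.mp h2), le_trans h1 (le_max_left a b)⟩
    · exact ⟨lt_of_le_of_lt (min_le_left a b) (not_le.mp h1), le_trans h2 (le_max_right a b)⟩
    · exact absurd (iff_of_false h1 h2) h
  · rintro ⟨h1, h2⟩ hiff
    rcases le_total a b with hab | hab
    · have h1' : a < z := by rwa [min_eq_left hab] at h1
      have h2' : z ≤ b := by rwa [max_eq_right hab] at h2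
      exact absurd (hiff.mpr h2') (not_le.mpr h1')
    · have h1' : b < z := by rwa [min_eq_right hab] at h1
      have h2' : z ≤ a := by rwa [max_eq_left hab] at h2
      exact absurd (hiff.mp h2') (not_le.mpr h1')

lemma slice_bound {f : ℝ → ℝ} {Cf ρ : ℝ} (hf : ∀ y, 0 ≤ f y)
    (hCf : ∀ y, |y * f y| ≤ Cf) (hρ : 0 < ρ) (x s s' : ℝ)
    (hs : ρ < s) (hs' : ρ < s') :
    (MeasureTheory.volume.withDensity fun y => ENNReal.ofReal (f y))
      {z : ℝ | ¬((s * z ≤ x) ↔ (s' * z ≤ x))} ≤ ENNReal.ofReal (Cf / ρ * |s - s'|) := by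
  have hs0 : (0:ℝ) < s := hρ.trans hs
  have hs'0 : (0:ℝ) < s' := hρ.trans hs'
  have hCf0 : (0:ℝ) ≤ Cf := by simpa using hCf 0
  have hset : {z : ℝ | ¬((s * z ≤ x) ↔ (s' * z ≤ x))}
      = Set.Ioc (min (x/s) (x/s')) (max (x/s) (x/s')) := by
    rw [← aux_symm_iic]
    ext z
    have e1 : (s * z ≤ x) ↔ (z ≤ x / s) := by rw [le_div_iff₀ hs0, mul_comm]
    have e2 : (s' * z ≤ x) ↔ (z ≤ x / s') := by rw [le_div_iff₀ hs'0, mul_comm]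
    simp only [Set.mem_setOf_eq, e1, e2]
  rw [hset, withDensity_apply _ measurableSet_Ioc]
  set a := min (x/s) (x/s') with ha
  set b := max (x/s) (x/s') with hb
  by_cases hx0 : x = 0
  · have : a = b := by simp [ha, hb, hx0]
    rw [this]
    simp [Set.Ioc_self]
  · have habsx : (0:ℝ) < |x| := abs_pos.mpr hx0
    have hmax0 : (0:ℝ) < max s s' := lt_of_lt_of_le hs0 (le_max_left _ _)
    set M := Cf * max s s' / |x| with hM
    have hM0 : 0 ≤ M := div_nonneg (mul_nonneg hCf0 hmax0.le) (abs_nonneg x)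
    have hpt : ∀ y ∈ Set.Ioc a b, ENNReal.ofReal (f y) ≤ ENNReal.ofReal M := by
      intro y hy
      apply ENNReal.ofReal_le_ofReal
      have hylb : |x| / max s s' ≤ |y| := by
        rcases lt_trichotomy x 0 with hx | hx | hx
        · have hb1 : x / s ≤ x / max s s' := by
            rw [div_le_div_iff₀ hs0 hmax0]
            nlinarith [le_max_left s s']
          have hb2 : x / s' ≤ x / max s s' := by
            rw [div_le_div_iff₀ hs'0 hmax0]
            nlinarith [le_max_right s s']
          have hble : y ≤ x / max s s' := hy.2.trans (max_le hb1 hb2)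
          have hyneg : y < 0 := lt_of_le_of_lt hble (div_neg_of_neg_of_pos hx hmax0)
          have hkey : y * max s s' ≤ x := (le_div_iff₀ hmax0).mp hble
          rw [abs_of_neg hx, abs_of_neg hyneg, div_le_iff₀ hmax0]
          nlinarith
        · exact absurd hx hx0
        · have ha1 : x / max s s' ≤ x / s := by
            rw [div_le_div_iff₀ hmax0 hs0]
            nlinarith [le_max_left s s']
          have ha2 : x / max s s' ≤ x / s' := by
            rw [div_le_div_iff₀ hmax0 hs'0]
            nlinarith [le_max_right s s']
          have hale : x / max s s' ≤ a := le_min ha1 ha2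
          have hay : x / max s s' < y := lt_of_le_of_lt hale hy.1
          have hypos : 0 < y := lt_trans (div_pos hx hmax0) hay
          rw [abs_of_pos hx, abs_of_pos hypos]
          exact le_of_lt hay
      -- f y ≤ M
      have hfy : |y| * f y ≤ Cf := by
        have := hCf y
        rwa [abs_mul, abs_of_nonneg (hf y)] at this
      rw [hM, le_div_iff₀ habsx]
      have h1 : |x| / max s s' * f y ≤ |y| * f y :=
        mul_le_mul_of_nonneg_right hylb (hf y)
      have h2 : |x| / max s s' * f y * max s s' ≤ Cf * max s s' :=
        mul_le_mul_of_nonneg_right (h1.trans hfy) hmax0.le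
      have h3 : |x| / max s s' * f y * max s s' = f y * |x| := by
        field_simp
      linarith [h3 ▸ h2]
    calc ∫⁻ y in Set.Ioc a b, ENNReal.ofReal (f y)
        ≤ ∫⁻ _ in Set.Ioc a b, ENNReal.ofReal M := setLIntegral_mono measurable_const hpt
      _ = ENNReal.ofReal M * volume (Set.Ioc a b) := setLIntegral_const _ _
      _ = ENNReal.ofReal M * ENNReal.ofReal (b - a) := by rw [Real.volume_Ioc]
      _ = ENNReal.ofReal (M * (b - a)) := (ENNReal.ofReal_mul hM0).symm
      _ ≤ ENNReal.ofReal (Cf / ρ * |s - s'|) := by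
          apply ENNReal.ofReal_le_ofReal
          have hdiff : b - a = |x / s - x / s'| := by rw [abs_sub_comm]; exact max_sub_min_eq_abs _ _
          have habs2 : |x / s - x / s'| = |x| * |s - s'| / (s * s') := by
            have : x / s - x / s' = x * (s' - s) / (s * s') := by
              field_simp
            rw [this, abs_div, abs_mul, abs_of_pos (mul_pos hs0 hs'0), abs_sub_comm]
          rw [hdiff, habs2, hM]
          have hcancel : Cf * max s s' / |x| * (|x| * |s - s'| / (s * s'))
              = Cf * |s - s'| * (max s s' / (s * s')) := by
            field_simp
          rw [hcancel]
          have hmin : max s s' / (s * s') = 1 / min s s' := by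
            rcases le_total s s' with h | h
            · rw [max_eq_right h, min_eq_left h]
              field_simp
            · rw [max_eq_left h, min_eq_right h]
              field_simp
          rw [hmin]
          have hρmin : ρ ≤ min s s' := le_min hs.le hs'.le
          have hmono : 1 / min s s' ≤ 1 / ρ :=
            one_div_le_one_div_of_le hρ hρmin
          calc Cf * |s - s'| * (1 / min s s') ≤ Cf * |s - s'| * (1 / ρ) := by
                apply mul_le_mul_of_nonneg_left hmono
                exact mul_nonneg hCf0 (abs_nonneg _)
            _ = Cf / ρ * |s - s'| := by ring

/-- If `X = σZ`, `X' = σ'Z` with `Z` independent of `(σ,σ')`, `Z` having a density `f`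
with `sup_y |y f(y)| ≤ C_f`, and `min(σ,σ') > ρ > 0` a.s., then for every `x`,
`E|1{X ≤ x} − 1{X' ≤ x}| ≤ (C_f/ρ) E|σ − σ'|`. -/
theorem expectation_indicator_diff_le_of_scale
    {Ω : Type*} [MeasurableSpace Ω] (μ : Measure Ω) [IsProbabilityMeasure μ]
    (Z S S' : Ω → ℝ) (f : ℝ → ℝ) (Cf ρ : ℝ)
    (hZ : Measurable Z) (hS : Measurable S) (hS' : Measurable S')
    (hindep : IndepFun Z (fun ω => (S ω, S' ω)) μ)
    (hdens : μ.map Z = MeasureTheory.volume.withDensity fun y => ENNReal.ofReal (f y))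
    (hf : ∀ y, 0 ≤ f y) (hCf : ∀ y, |y * f y| ≤ Cf)
    (hρ : 0 < ρ) (hlb : ∀ᵐ ω ∂μ, ρ < min (S ω) (S' ω))
    (hint : Integrable (fun ω => |S ω - S' ω|) μ) :
    ∀ x : ℝ,
      (∫ ω, |(if S ω * Z ω ≤ x then (1 : ℝ) else 0) -
              if S' ω * Z ω ≤ x then (1 : ℝ) else 0| ∂μ) ≤
        Cf / ρ * ∫ ω, |S ω - S' ω| ∂μ := by
  intro x
  have hCf0 : (0:ℝ) ≤ Cf := by simpa using hCf 0
  have hpair : Measurable fun ω => (S ω, S' ω) := hS.prodMk hS'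
  set F : Ω → (ℝ × ℝ) × ℝ := fun ω => ((S ω, S' ω), Z ω) with hF
  have hFm : Measurable F := hpair.prodMk hZ
  set T : Set ((ℝ × ℝ) × ℝ) :=
    {p | ¬((p.1.1 * p.2 ≤ x) ↔ (p.1.2 * p.2 ≤ x))} with hT
  have hU1 : MeasurableSet {p : (ℝ × ℝ) × ℝ | p.1.1 * p.2 ≤ x} :=
    measurableSet_le ((measurable_fst.fst).mul measurable_snd) measurable_const
  have hU2 : MeasurableSet {p : (ℝ × ℝ) × ℝ | p.1.2 * p.2 ≤ x} :=
    measurableSet_le ((measurable_fst.snd).mul measurable_snd) measurable_const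
  have hTm : MeasurableSet T := by
    have : T = ({p : (ℝ × ℝ) × ℝ | p.1.1 * p.2 ≤ x} \ {p | p.1.2 * p.2 ≤ x})
        ∪ ({p | p.1.2 * p.2 ≤ x} \ {p | p.1.1 * p.2 ≤ x}) := by
      ext p
      simp only [hT, Set.mem_setOf_eq, Set.mem_union, Set.mem_diff, Set.mem_setOf_eq]
      tauto
    rw [this]
    exact (hU1.diff hU2).union (hU2.diff hU1)
  -- Step 1: integrand is indicator of F ⁻¹' T
  have hind : (fun ω => |(if S ω * Z ω ≤ x then (1 : ℝ) else 0) -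
      if S' ω * Z ω ≤ x then (1 : ℝ) else 0|)
      = (F ⁻¹' T).indicator (fun _ => (1:ℝ)) := by
    funext ω
    by_cases h1 : S ω * Z ω ≤ x <;> by_cases h2 : S' ω * Z ω ≤ x <;>
      simp [Set.indicator, hT, hF, h1, h2]
  rw [hind, integral_indicator_const (1:ℝ) (hFm hTm), smul_eq_mul, mul_one]
  -- Step 2: independence
  haveI : IsProbabilityMeasure (μ.map Z) := Measure.isProbabilityMeasure_map hZ.aemeasurable
  haveI : IsProbabilityMeasure (μ.map fun ω => (S ω, S' ω)) :=
    Measure.isProbabilityMeasure_map hpair.aemeasurable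
  have hmap : μ.map F = (μ.map fun ω => (S ω, S' ω)).prod (μ.map Z) :=
    (indepFun_iff_map_prod_eq_prod_map_map hpair.aemeasurable hZ.aemeasurable).mp hindep.symm
  have hmeas : μ (F ⁻¹' T) = ((μ.map fun ω => (S ω, S' ω)).prod (μ.map Z)) T := by
    rw [← hmap, Measure.map_apply hFm hTm]
  rw [measureReal_def, hmeas, Measure.prod_apply hTm]
  -- Step 3: bound the lintegral
  have hsetlb : MeasurableSet {p : ℝ × ℝ | ρ < min p.1 p.2} :=
    measurableSet_lt measurable_const (measurable_fst.min measurable_snd)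
  have hae : ∀ᵐ p ∂(μ.map fun ω => (S ω, S' ω)), ρ < min p.1 p.2 := by
    rw [ae_map_iff hpair.aemeasurable hsetlb]
    exact hlb
  have hslice : ∀ᵐ p ∂(μ.map fun ω => (S ω, S' ω)),
      (μ.map Z) (Prod.mk p ⁻¹' T) ≤ ENNReal.ofReal (Cf / ρ * |p.1 - p.2|) := by
    filter_upwards [hae] with p hp
    have hp1 : ρ < p.1 := lt_of_lt_of_le hp (min_le_left _ _)
    have hp2 : ρ < p.2 := lt_of_lt_of_le hp (min_le_right _ _)
    have : Prod.mk p ⁻¹' T = {z : ℝ | ¬((p.1 * z ≤ x) ↔ (p.2 * z ≤ x))} := rfl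
    rw [this, hdens]
    exact slice_bound hf hCf hρ x p.1 p.2 hp1 hp2
  have hchain : (∫⁻ p, (μ.map Z) (Prod.mk p ⁻¹' T) ∂(μ.map fun ω => (S ω, S' ω)))
      ≤ ENNReal.ofReal (Cf / ρ * ∫ ω, |S ω - S' ω| ∂μ) := by
    calc ∫⁻ p, (μ.map Z) (Prod.mk p ⁻¹' T) ∂(μ.map fun ω => (S ω, S' ω))
        ≤ ∫⁻ p, ENNReal.ofReal (Cf / ρ * |p.1 - p.2|) ∂(μ.map fun ω => (S ω, S' ω)) :=
          lintegral_mono_ae hslice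
      _ = ∫⁻ ω, ENNReal.ofReal (Cf / ρ * |S ω - S' ω|) ∂μ := by
          rw [lintegral_map (by
            exact ENNReal.measurable_ofReal.comp
              ((measurable_const.mul ((measurable_fst.sub measurable_snd).abs)))) hpair]
      _ = ENNReal.ofReal (∫ ω, Cf / ρ * |S ω - S' ω| ∂μ) :=
          (ofReal_integral_eq_lintegral_ofReal (hint.const_mul _)
            (Filter.Eventually.of_forall fun ω =>
              mul_nonneg (div_nonneg hCf0 hρ.le) (abs_nonneg _))).symm
      _ = ENNReal.ofReal (Cf / ρ * ∫ ω, |S ω - S' ω| ∂μ) := by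
          rw [integral_const_mul]
  exact ENNReal.toReal_le_of_le_ofReal
    (mul_nonneg (div_nonneg hCf0 hρ.le) (integral_nonneg fun ω => abs_nonneg _)) hchain
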